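/- Let f: ℝ → ℝ be strictly increasing with |f''(z)| ≤ f'(z) for all z in a bounded interval Z. Then for all z₁, z₂ ∈ Z: ∫₀¹ f'(z₁ + v(z₂ − z₁)) dv ≥ f'(z)/(1 + |z₁ − z₂|) for z ∈ {z₁, z₂}. -/

import Mathlib

open Real intervalIntegral Filter Topology

private lemma aux_int (s : ℝ) (hs : 0 ≤ s) :
    1 / (1 + s) ≤ ∫ v in (0:ℝ)..1, Real.exp (-(s * v)) := by
  rcases eq_or_lt_of_le hs with h | h
  · simp [← h]
  · have hcomp : s • ∫ v in (0:ℝ)..1, Real.exp (-(s * v))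
        = ∫ x in (s*0)..(s*1), Real.exp (-x) := by
      exact intervalIntegral.smul_integral_comp_mul_left (fun x => Real.exp (-x)) s
    have h2 : (∫ x in (0:ℝ)..s, Real.exp (-x)) = 1 - Real.exp (-s) := by
      rw [intervalIntegral.integral_comp_neg (fun x => Real.exp x)]
      rw [integral_exp]
      simp
    rw [mul_zero, mul_one, h2] at hcomp
    have hint : (∫ v in (0:ℝ)..1, Real.exp (-(s * v))) = (1 - Real.exp (-s)) / s := by
      field_simp at hcomp ⊢
      linarith [hcomp, smul_eq_mul s (∫ v in (0:ℝ)..1, Real.exp (-(s * v)))]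
    rw [hint]
    rw [div_le_div_iff₀ (by linarith) h]
    have he : Real.exp (-s) * Real.exp s = 1 := by
      rw [← Real.exp_add]; simp
    nlinarith [Real.add_one_le_exp s, Real.exp_pos s, Real.exp_pos (-s)]

theorem stmt_11 (f : ℝ → ℝ) (A B : ℝ) (hf : ContDiff ℝ 2 f) (hmono : StrictMono f)
    (hsc : ∀ z ∈ Set.Icc A B, |deriv (deriv f) z| ≤ deriv f z)
    (z₁ z₂ : ℝ) (h₁ : z₁ ∈ Set.Icc A B) (h₂ : z₂ ∈ Set.Icc A B)
    (z : ℝ) (hz : z = z₁ ∨ z = z₂) :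
    deriv f z / (1 + |z₁ - z₂|) ≤ ∫ v in (0:ℝ)..1, deriv f (z₁ + v * (z₂ - z₁)) := by
  set g := deriv f with hgdef
  have hg1 : ContDiff ℝ 1 g := by
    have : ((1 : ℕ) + 1 : WithTop ℕ∞) = 2 := by norm_num
    rw [← this] at hf
    exact (contDiff_succ_iff_deriv.mp hf).2.2
  have hgd : Differentiable ℝ g := hg1.differentiable one_ne_zero
  have hgc : Continuous g := hgd.continuous
  -- g nonneg everywhere
  have hg0 : ∀ x, 0 ≤ g x := by
    intro x
    have hdf : HasDerivAt f (g x) x := ((hf.differentiable (by norm_num)) x).hasDerivAt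
    have hd : Tendsto (slope f x) (𝓝[>] x) (𝓝 (g x)) :=
      (hasDerivAt_iff_tendsto_slope.mp hdf).mono_left
        (nhdsWithin_mono x fun y hy => ne_of_gt (Set.mem_Ioi.mp hy))
    refine ge_of_tendsto hd ?_
    filter_upwards [self_mem_nhdsWithin] with y hy
    have hy' : x < y := hy
    rw [slope_def_field]
    exact div_nonneg (by linarith [(hmono hy').le]) (by linarith)
  -- key exponential bound
  have key : ∀ w ∈ Set.Icc A B, ∀ y ∈ Set.Icc A B,
      g y * Real.exp (-|w - y|) ≤ g w := by
    have hF : MonotoneOn (fun t => g t * Real.exp t) (Set.Icc A B) := by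
      apply monotoneOn_of_deriv_nonneg (convex_Icc A B)
      · exact (hgc.mul Real.continuous_exp).continuousOn
      · exact (hgd.mul Real.differentiable_exp).differentiableOn
      · intro x hx
        have hx' : x ∈ Set.Icc A B := interior_subset hx
        have hd : HasDerivAt (fun t => g t * Real.exp t)
            (deriv g x * Real.exp x + g x * Real.exp x) x :=
          ((hgd x).hasDerivAt).mul (Real.hasDerivAt_exp x)
        rw [hd.deriv]
        have h1 := hsc x hx'
        have h2 := abs_le.mp h1
        nlinarith [Real.exp_pos x]
    have hG : AntitoneOn (fun t => g t * Real.exp (-t)) (Set.Icc A B) := by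
      apply antitoneOn_of_deriv_nonpos (convex_Icc A B)
      · exact (hgc.mul (Real.continuous_exp.comp continuous_neg)).continuousOn
      · exact (hgd.mul (Real.differentiable_exp.comp differentiable_neg)).differentiableOn
      · intro x hx
        have hx' : x ∈ Set.Icc A B := interior_subset hx
        have hde : HasDerivAt (fun t => Real.exp (-t)) (-Real.exp (-x)) x := by
          simpa [Function.comp_def] using (Real.hasDerivAt_exp (-x)).comp x (hasDerivAt_neg x)
        have hd : HasDerivAt (fun t => g t * Real.exp (-t))
            (deriv g x * Real.exp (-x) + g x * (-Real.exp (-x))) x :=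
          ((hgd x).hasDerivAt).mul hde
        rw [hd.deriv]
        have h2 := abs_le.mp (hsc x hx')
        nlinarith [Real.exp_pos (-x)]
    intro w hw y hy
    rcases le_total y w with h | h
    · have := hF hy hw h
      have habs : |w - y| = w - y := abs_of_nonneg (by linarith)
      have := mul_le_mul_of_nonneg_right this (Real.exp_pos (-w)).le
      calc g y * Real.exp (-|w - y|) = g y * Real.exp y * Real.exp (-w) := by
            rw [habs, mul_assoc, ← Real.exp_add]; ring_nf
        _ ≤ g w * Real.exp w * Real.exp (-w) := this
        _ = g w := by rw [mul_assoc, ← Real.exp_add]; simp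
    · have := hG hw hy h
      have habs : |w - y| = y - w := by
        rw [abs_sub_comm]; exact abs_of_nonneg (by linarith)
      have := mul_le_mul_of_nonneg_right this (Real.exp_pos w).le
      calc g y * Real.exp (-|w - y|) = g y * Real.exp (-y) * Real.exp w := by
            rw [habs, mul_assoc, ← Real.exp_add]; ring_nf
        _ ≤ g w * Real.exp (-w) * Real.exp w := this
        _ = g w := by rw [mul_assoc, ← Real.exp_add]; simp
  -- membership of the path
  have hpath : ∀ v ∈ Set.Icc (0:ℝ) 1, z₁ + v * (z₂ - z₁) ∈ Set.Icc A B := by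
    intro v hv
    simpa [smul_eq_mul] using (convex_Icc A B).add_smul_sub_mem h₁ h₂ hv
  have hcont : Continuous (fun v => g (z₁ + v * (z₂ - z₁))) :=
    hgc.comp (continuous_const.add (continuous_id.mul continuous_const))
  set s := |z₂ - z₁| with hsdef
  have hs : 0 ≤ s := abs_nonneg _
  have habs12 : |z₁ - z₂| = s := abs_sub_comm z₁ z₂
  rcases hz with rfl | rfl
  · -- z = z₁
    have hpt : ∀ v ∈ Set.Icc (0:ℝ) 1,
        g z * Real.exp (-(s * v)) ≤ g (z + v * (z₂ - z)) := by
      intro v hv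
      have hw := hpath v hv
      have habs : |z + v * (z₂ - z) - z| = s * v := by
        rw [show z + v * (z₂ - z) - z = v * (z₂ - z) by ring, abs_mul,
          abs_of_nonneg hv.1, mul_comm]
      have := key _ hw z h₁
      rwa [habs] at this
    calc g z / (1 + |z - z₂|) = g z * (1 / (1 + s)) := by
          rw [habs12]; ring
      _ ≤ g z * ∫ v in (0:ℝ)..1, Real.exp (-(s * v)) := by
          apply mul_le_mul_of_nonneg_left (aux_int s hs) (hg0 z)
      _ = ∫ v in (0:ℝ)..1, g z * Real.exp (-(s * v)) := by
          rw [← intervalIntegral.integral_const_mul]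
      _ ≤ ∫ v in (0:ℝ)..1, g (z + v * (z₂ - z)) := by
          apply intervalIntegral.integral_mono_on zero_le_one
          · exact (Continuous.intervalIntegrable (continuous_const.mul
              (Real.continuous_exp.comp (continuous_const.mul continuous_id).neg)) _ _)
          · exact hcont.intervalIntegrable _ _
          · exact hpt
  · -- z = z₂
    have hpt : ∀ v ∈ Set.Icc (0:ℝ) 1,
        g z * Real.exp (-(s * (1 - v))) ≤ g (z₁ + v * (z - z₁)) := by
      intro v hv
      have hw := hpath v hv
      have habs : |z₁ + v * (z - z₁) - z| = s * (1 - v) := by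
        rw [show z₁ + v * (z - z₁) - z = (1 - v) * (z₁ - z) by ring, abs_mul,
          abs_of_nonneg (by linarith [hv.2]), hsdef, abs_sub_comm z₁ z, mul_comm]
      have := key _ hw z h₂
      rwa [habs] at this
    have hsym : (∫ v in (0:ℝ)..1, Real.exp (-(s * (1 - v))))
        = ∫ v in (0:ℝ)..1, Real.exp (-(s * v)) := by
      have := intervalIntegral.integral_comp_sub_left
        (fun v => Real.exp (-(s * v))) 1 (a := 0) (b := 1)
      simpa using this
    calc g z / (1 + |z₁ - z|) = g z * (1 / (1 + s)) := by
          rw [show |z₁ - z| = s from abs_sub_comm z₁ z]; ring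
      _ ≤ g z * ∫ v in (0:ℝ)..1, Real.exp (-(s * v)) := by
          apply mul_le_mul_of_nonneg_left (aux_int s hs) (hg0 z)
      _ = ∫ v in (0:ℝ)..1, g z * Real.exp (-(s * (1 - v))) := by
          rw [← hsym, ← intervalIntegral.integral_const_mul]
      _ ≤ ∫ v in (0:ℝ)..1, g (z₁ + v * (z - z₁)) := by
          apply intervalIntegral.integral_mono_on zero_le_one
          · exact (Continuous.intervalIntegrable (continuous_const.mul
              (Real.continuous_exp.comp (continuous_const.mul
                (continuous_const.sub continuous_id)).neg)) _ _)
          · exact hcont.intervalIntegrable _ _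
          · exact hpt
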